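/- Let R = (R0 | R̃0) be an (N+3)×(3N+3) matrix partitioned so that R̃0 is an invertible (N+3)×(N+3) block, let E be a (3N+3)×(3N+3) antisymmetric matrix with R·E = 0, let P0 = (Id_{2N}; 0) be the projection onto the first 2N coordinates, E0 = P0ᵀ E P0, and M0 = (Id_{2N}; −R̃0⁻¹R0). Then E = M0 · E0 · M0ᵀ. -/

import Mathlib

open Matrix

/-- Let `R = (R0 | R̃0)` be an `(N+3)×(3N+3)` matrix with `R̃0` invertible, and
`E` an antisymmetric `(3N+3)×(3N+3)` matrix with `R·E = 0`.  With
`E0 = P0ᵀ E P0` (restriction to the first `2N` coordinates) and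
`M0 = (Id_{2N}; −R̃0⁻¹R0)`, one has `E = M0·E0·M0ᵀ`. -/
theorem stmt17 (N : ℕ)
    (R0 : Matrix (Fin (N + 3)) (Fin (2 * N)) ℂ)
    (Rt0 : Matrix (Fin (N + 3)) (Fin (N + 3)) ℂ)
    (hRt0 : IsUnit Rt0.det)
    (E : Matrix (Fin (2 * N) ⊕ Fin (N + 3)) (Fin (2 * N) ⊕ Fin (N + 3)) ℂ)
    (hE : Eᵀ = -E)
    (hRE : Matrix.fromCols R0 Rt0 * E = 0) :
    E = Matrix.fromRows (1 : Matrix (Fin (2 * N)) (Fin (2 * N)) ℂ) (-(Rt0⁻¹ * R0))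
          * E.submatrix Sum.inl Sum.inl
          * (Matrix.fromRows (1 : Matrix (Fin (2 * N)) (Fin (2 * N)) ℂ)
              (-(Rt0⁻¹ * R0)))ᵀ := by
  set A := E.toBlocks₁₁ with hA
  set B := E.toBlocks₁₂ with hB
  set C := E.toBlocks₂₁ with hC
  set D := E.toBlocks₂₂ with hD
  have hEb : E = fromBlocks A B C D := (fromBlocks_toBlocks E).symm
  have hAsub : E.submatrix Sum.inl Sum.inl = A := rfl
  set S := Rt0⁻¹ * R0 with hS
  have hAT : Aᵀ = -A := by
    ext i j
    have := congrFun (congrFun hE (Sum.inl i)) (Sum.inl j)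
    simpa [hA, toBlocks₁₁] using this
  have hBT : Bᵀ = -C := by
    ext i j
    have := congrFun (congrFun hE (Sum.inr i)) (Sum.inl j)
    simpa [hB, hC, toBlocks₁₂, toBlocks₂₁] using this
  have hsum : fromCols (R0 * A) (R0 * B) + fromCols (Rt0 * C) (Rt0 * D) = 0 := by
    have : fromCols R0 Rt0 * fromRows (fromCols A B) (fromCols C D) = 0 := by
      rw [fromRows_fromCols_eq_fromBlocks, ← hEb]; exact hRE
    rw [fromCols_mul_fromRows] at this
    simpa only [mul_fromCols] using this
  have h1 : R0 * A + Rt0 * C = 0 := by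
    ext i j
    have := congrFun (congrFun hsum i) (Sum.inl j)
    simpa [fromCols] using this
  have h2 : R0 * B + Rt0 * D = 0 := by
    ext i j
    have := congrFun (congrFun hsum i) (Sum.inr j)
    simpa [fromCols] using this
  have hCeq : C = -(S * A) := by
    have h : Rt0 * C = -(R0 * A) := eq_neg_of_add_eq_zero_right h1
    calc C = Rt0⁻¹ * (Rt0 * C) := by
            rw [← Matrix.mul_assoc, nonsing_inv_mul _ hRt0, Matrix.one_mul]
      _ = -(S * A) := by rw [h, hS, Matrix.mul_neg, Matrix.mul_assoc]
  have hDeq : D = -(S * B) := by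
    have h : Rt0 * D = -(R0 * B) := eq_neg_of_add_eq_zero_right h2
    calc D = Rt0⁻¹ * (Rt0 * D) := by
            rw [← Matrix.mul_assoc, nonsing_inv_mul _ hRt0, Matrix.one_mul]
      _ = -(S * B) := by rw [h, hS, Matrix.mul_neg, Matrix.mul_assoc]
  have hBeq : B = -(A * Sᵀ) := by
    have hBC : B = -Cᵀ := by
      have := congrArg transpose hBT
      simpa using this
    rw [hBC, hCeq, transpose_neg, transpose_mul, hAT]
    simp [Matrix.neg_mul]
  have hDeq' : D = S * A * Sᵀ := by
    rw [hDeq, hBeq, Matrix.mul_neg, neg_neg]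
    simp [hS, Matrix.mul_assoc]
  rw [hAsub, transpose_fromRows, fromRows_mul, fromRows_mul_fromCols, hEb,
    hCeq, hBeq, hDeq']
  simp [Matrix.neg_mul, Matrix.mul_neg, Matrix.mul_assoc]
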